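/- Let ℓ be a prime and let χ = (χ₁, χ₂), ψ = (ψ₁, ψ₂) be pairs of unramified smooth characters of ℚ_ℓ^× with |χᵢ(ℓ)/ψᵢ(ℓ)| < ℓ for i = 1, 2. For t ≥ 0 let Φ_t := φ_t ⊗ φ_t and f_{Φ_t,χ,ψ} := the restriction to H(ℚ_ℓ) of f_{φ_t,χ₁,ψ₁} ⊗ f_{φ_t,χ₂,ψ₂}. Then: (a) f_{Φ₀,χ,ψ}(1) = 1, and for t ≥ 1, f_{Φ_t,χ,ψ}(1) = L(χ₁/ψ₁, 1)^{−1}·L(χ₂/ψ₂, 1)^{−1} = (1 − χ₁(ℓ)ψ₁(ℓ)^{−1}ℓ^{−1})(1 − χ₂(ℓ)ψ₂(ℓ)^{−1}ℓ^{−1}); (b) for t ≥ 1, f_{Φ_t,χ,ψ} vanishes at every point of H(ℚ_ℓ) not lying in B_H(ℚ_ℓ)·K_{H,0}(ℓ^t), where B_H(ℚ_ℓ) consists of pairs of upper-triangular matrices in H(ℚ_ℓ) and K_{H,0}(ℓ^t) := {(h₁,h₂) ∈ H(ℤ_ℓ) : the lower-left entries of h₁ and h₂ lie in ℓ^tℤ_ℓ}.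 -/

import Mathlib

/-!
Statement 17: values and support of the Siegel sections `f_{Φ_t,χ,ψ}` on
`H(ℚ_ℓ) = GL₂(ℚ_ℓ) ×_{det} GL₂(ℚ_ℓ)`.
-/

open scoped Classical
open MeasureTheory Matrix

noncomputable section

namespace GSp4ES

variable (l : ℕ) [Fact l.Prime]

instance : MeasurableSpace ℚ_[l] := borel _
instance : BorelSpace ℚ_[l] := ⟨rfl⟩

abbrev PChar := ℚ_[l]ˣ →* ℂˣ

def IsSmoothChar (χ : PChar l) : Prop :=
  ∃ U : Subgroup ℚ_[l]ˣ, IsOpen (U : Set ℚ_[l]ˣ) ∧ ∀ x ∈ U, χ x = 1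

def IsUnramifiedChar (χ : PChar l) : Prop :=
  ∀ x : ℚ_[l]ˣ, ‖(x : ℚ_[l])‖ = 1 → χ x = 1

def ellU : ℚ_[l]ˣ :=
  Units.mk0 (l : ℚ_[l]) (by
    have h := (Fact.out : l.Prime).pos
    exact_mod_cast Nat.cast_ne_zero.mpr h.ne')

abbrev GL2 := GL (Fin 2) ℚ_[l]

def detU2 (g : GL2 l) : ℚ_[l]ˣ := Matrix.GeneralLinearGroup.det g

def LrecipOne (χ ψ : PChar l) : ℂ :=
  1 - (χ (ellU l) : ℂ) * ((ψ (ellU l) : ℂ))⁻¹ * (l : ℂ)⁻¹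

def siegelSection (μx : Measure ℚ_[l]ˣ) (φ : (Fin 2 → ℚ_[l]) → ℂ) (χ ψ : PChar l)
    (g : GL2 l) : ℂ :=
  (χ (detU2 l g) : ℂ) * ((Real.sqrt ‖((detU2 l g : ℚ_[l]ˣ) : ℚ_[l])‖ : ℝ) : ℂ) *
    LrecipOne l χ ψ *
    ∫ x : ℚ_[l]ˣ,
      φ (Matrix.vecMul ![0, (x : ℚ_[l])] (g : Matrix (Fin 2) (Fin 2) ℚ_[l])) *
        ((χ x : ℂ) * ((ψ x : ℂ))⁻¹) * (‖(x : ℚ_[l])‖ : ℂ) ∂μx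

def phi0 : (Fin 2 → ℚ_[l]) → ℂ :=
  fun v => if ‖v 0‖ ≤ 1 ∧ ‖v 1‖ ≤ 1 then 1 else 0

def phiT (t : ℕ) : (Fin 2 → ℚ_[l]) → ℂ :=
  fun v => if ‖v 0‖ ≤ (l : ℝ) ^ (-(t : ℤ)) ∧ ‖v 1‖ = 1 then 1 else 0

def inGL2Z (g : GL2 l) : Prop :=
  (∀ i j, ‖(g : Matrix (Fin 2) (Fin 2) ℚ_[l]) i j‖ ≤ 1) ∧
  (∀ i j, ‖((g⁻¹ : GL2 l) : Matrix (Fin 2) (Fin 2) ℚ_[l]) i j‖ ≤ 1)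

/-- The pair `(h₁, h₂)` lies in `B_H(ℚ_ℓ)·K_{H,0}(ℓ^t)`. -/
def inBHKH0 (t : ℕ) (h₁ h₂ : GL2 l) : Prop :=
  ∃ b₁ b₂ k₁ k₂ : GL2 l,
    -- (b₁, b₂) ∈ B_H(ℚ_ℓ): upper triangular with equal determinants
    (b₁ : Matrix (Fin 2) (Fin 2) ℚ_[l]) 1 0 = 0 ∧
    (b₂ : Matrix (Fin 2) (Fin 2) ℚ_[l]) 1 0 = 0 ∧
    detU2 l b₁ = detU2 l b₂ ∧
    -- (k₁, k₂) ∈ K_{H,0}(ℓ^t)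
    inGL2Z l k₁ ∧ inGL2Z l k₂ ∧ detU2 l k₁ = detU2 l k₂ ∧
    ‖(k₁ : Matrix (Fin 2) (Fin 2) ℚ_[l]) 1 0‖ ≤ (l : ℝ) ^ (-(t : ℤ)) ∧
    ‖(k₂ : Matrix (Fin 2) (Fin 2) ℚ_[l]) 1 0‖ ≤ (l : ℝ) ^ (-(t : ℤ)) ∧
    h₁ = b₁ * k₁ ∧ h₂ = b₂ * k₂


-- ### Auxiliary lemmas

lemma one_lt_l : (1:ℝ) < l := by exact_mod_cast (Fact.out : l.Prime).one_lt
lemma l_pos : (0:ℝ) < l := lt_trans one_pos (one_lt_l l)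

lemma norm_ellU : ‖((ellU l : ℚ_[l]ˣ) : ℚ_[l])‖ = (l:ℝ)⁻¹ := Padic.norm_p

/-- The shell `{x : ‖x‖ = ℓ^{-n}}` in `ℚ_ℓˣ`. -/
def Sn (n : ℕ) : Set ℚ_[l]ˣ := {x | ‖(x : ℚ_[l])‖ = (l:ℝ) ^ (-(n:ℤ))}

lemma measurable_normU : Measurable (fun x : ℚ_[l]ˣ => ‖(x : ℚ_[l])‖) :=
  measurable_norm.comp (measurable_iff_comap_le.mpr le_rfl)

lemma measSn (n : ℕ) : MeasurableSet (Sn l n) :=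
  measurable_normU l (measurableSet_singleton _)

lemma Sn_zero : Sn l 0 = {x : ℚ_[l]ˣ | ‖(x : ℚ_[l])‖ = 1} := by simp [Sn]

lemma measurable_mulLeft (c : ℚ_[l]ˣ) : Measurable (fun y : ℚ_[l]ˣ => c * y) := by
  intro s hs
  obtain ⟨t, ht, rfl⟩ := hs
  refine ⟨(fun z : ℚ_[l] => (c : ℚ_[l]) * z) ⁻¹' t, (measurable_const_mul _) ht, ?_⟩
  ext y
  simp [Set.mem_preimage]

lemma norm_inv_pow_ellU (n : ℕ) :
    ‖((((ellU l)^n)⁻¹ : ℚ_[l]ˣ) : ℚ_[l])‖ = (l:ℝ) ^ (n:ℤ) := by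
  have h1 : (((ellU l)^n : ℚ_[l]ˣ) : ℚ_[l]) = ((ellU l : ℚ_[l]ˣ) : ℚ_[l])^n :=
    Units.val_pow_eq_pow_val _ _
  rw [Units.val_inv_eq_inv_val, norm_inv, h1, norm_pow, norm_ellU, ← inv_pow, inv_inv,
    zpow_natCast]

lemma muSn (μx : Measure ℚ_[l]ˣ) [μx.IsHaarMeasure]
    (hμx : μx {x : ℚ_[l]ˣ | ‖(x : ℚ_[l])‖ = 1} = 1) (n : ℕ) : μx (Sn l n) = 1 := by
  have hl0 : (l:ℝ) ≠ 0 := ne_of_gt (l_pos l)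
  have key : Sn l n = (fun y => ((ellU l)^n)⁻¹ * y) ⁻¹' (Sn l 0) := by
    ext y
    simp only [Sn, Set.mem_preimage, Set.mem_setOf_eq, Units.val_mul, norm_mul,
      Nat.cast_zero, neg_zero, zpow_zero, norm_inv_pow_ellU]
    constructor
    · intro h
      rw [h, ← zpow_add₀ hl0]
      simp
    · intro h
      have h2 : ((l:ℝ) ^ (n:ℤ))⁻¹ * ((l:ℝ) ^ (n:ℤ) * ‖(y:ℚ_[l])‖) = ((l:ℝ) ^ (n:ℤ))⁻¹ := by
        rw [h, mul_one]
      rw [← mul_assoc, inv_mul_cancel₀ (zpow_ne_zero _ hl0), one_mul] at h2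
      rw [h2, ← _root_.zpow_neg]
  have hmap : μx ((fun y => ((ellU l)^n)⁻¹ * y) ⁻¹' (Sn l 0)) = μx (Sn l 0) := by
    rw [← Measure.map_apply (measurable_mulLeft l _) (measSn l 0),
      MeasureTheory.map_mul_left_eq_self μx _]
  rw [key, hmap, Sn_zero, hμx]

lemma exists_shell (x : ℚ_[l]ˣ) (hx : ‖(x : ℚ_[l])‖ ≤ 1) :
    ∃ n : ℕ, x ∈ Sn l n := by
  have hne : (x : ℚ_[l]) ≠ 0 := x.ne_zero
  have hv : ‖(x:ℚ_[l])‖ = (l:ℝ) ^ (-(x:ℚ_[l]).valuation) := Padic.norm_eq_zpow_neg_valuation hne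
  have hval : 0 ≤ (x:ℚ_[l]).valuation := by
    by_contra h
    push_neg at h
    have h1 : (1:ℝ) < (l:ℝ) ^ (-(x:ℚ_[l]).valuation) :=
      one_lt_zpow₀ (one_lt_l l) (by omega)
    rw [← hv] at h1; linarith
  exact ⟨(x:ℚ_[l]).valuation.toNat, by
    show ‖(x:ℚ_[l])‖ = _
    rw [hv]
    congr 1
    omega⟩

lemma shell_unique {n m : ℕ} (h : (l:ℝ) ^ (-(n:ℤ)) = (l:ℝ) ^ (-(m:ℤ))) : n = m := by
  have := zpow_right_injective₀ (l_pos l) (ne_of_gt (one_lt_l l)) h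
  omega

lemma unram_pow (χ : PChar l) (hχ : IsUnramifiedChar l χ) (x : ℚ_[l]ˣ) (n : ℕ)
    (hx : x ∈ Sn l n) : χ x = (χ (ellU l)) ^ n := by
  have hu : ‖((((ellU l)^n)⁻¹ * x : ℚ_[l]ˣ) : ℚ_[l])‖ = 1 := by
    have hx' : ‖(x:ℚ_[l])‖ = (l:ℝ)^(-(n:ℤ)) := hx
    simp only [Units.val_mul, norm_mul, norm_inv_pow_ellU, hx']
    rw [← zpow_add₀ (ne_of_gt (l_pos l))]
    simp
  have h2 : (χ ((ellU l)^n))⁻¹ * χ x = 1 := by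
    rw [← map_inv, ← _root_.map_mul]; exact hχ _ hu
  rw [← map_pow]
  exact (inv_mul_eq_one.mp h2).symm

lemma cast_shell (n : ℕ) : (((l:ℝ) ^ (-(n:ℤ)) : ℝ) : ℂ) = ((l:ℂ)⁻¹)^n := by
  push_cast
  rw [_root_.zpow_neg, zpow_natCast, inv_pow]

lemma norm_beta_lt (χ ψ : PChar l)
    (hlt : ‖(χ (ellU l) : ℂ) / (ψ (ellU l) : ℂ)‖ < l) :
    ‖(χ (ellU l) : ℂ) * ((ψ (ellU l) : ℂ))⁻¹ * (l:ℂ)⁻¹‖ < 1 := by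
  rw [norm_mul, norm_inv, Complex.norm_natCast]
  rw [← div_eq_mul_inv, div_lt_one (l_pos l), ← div_eq_mul_inv]
  exact hlt

lemma shell_le_one (n : ℕ) : (l:ℝ) ^ (-(n:ℤ)) ≤ 1 :=
  zpow_le_one_of_nonpos₀ (le_of_lt (one_lt_l l)) (by omega)

lemma int_phi0 (μx : Measure ℚ_[l]ˣ) [μx.IsHaarMeasure]
    (χ ψ : PChar l) (hχ : IsUnramifiedChar l χ) (hψ : IsUnramifiedChar l ψ)
    (hμx : μx {x : ℚ_[l]ˣ | ‖(x : ℚ_[l])‖ = 1} = 1)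
    (hlt : ‖(χ (ellU l) : ℂ) / (ψ (ellU l) : ℂ)‖ < l) :
    (∫ x : ℚ_[l]ˣ,
      phi0 l (Matrix.vecMul ![0, (x : ℚ_[l])] ((1 : GL2 l) : Matrix (Fin 2) (Fin 2) ℚ_[l])) *
        ((χ x : ℂ) * ((ψ x : ℂ))⁻¹) * (‖(x : ℚ_[l])‖ : ℂ) ∂μx)
      = (LrecipOne l χ ψ)⁻¹ := by
  set β : ℂ := (χ (ellU l) : ℂ) * ((ψ (ellU l) : ℂ))⁻¹ * (l:ℂ)⁻¹ with hβdef
  have hβ : ‖β‖ < 1 := norm_beta_lt l χ ψ hlt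
  have hpt : ∀ x : ℚ_[l]ˣ,
      phi0 l (Matrix.vecMul ![0, (x : ℚ_[l])] ((1 : GL2 l) : Matrix (Fin 2) (Fin 2) ℚ_[l])) *
        ((χ x : ℂ) * ((ψ x : ℂ))⁻¹) * (‖(x : ℚ_[l])‖ : ℂ)
      = ∑' n, (Sn l n).indicator (fun _ => β ^ n) x := by
    intro x
    rw [Units.val_one, Matrix.vecMul_one]
    by_cases hx : ‖(x : ℚ_[l])‖ ≤ 1
    · obtain ⟨n, hn⟩ := exists_shell l x hx
      have hxn : ‖(x:ℚ_[l])‖ = (l:ℝ)^(-(n:ℤ)) := hn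
      have hphi : phi0 l ![0, (x:ℚ_[l])] = 1 := by
        simp [phi0, hx]
      have hχx : (χ x : ℂ) = (χ (ellU l) : ℂ)^n := by
        rw [unram_pow l χ hχ x n hn, Units.val_pow_eq_pow_val]
      have hψx : ((ψ x : ℂ))⁻¹ = (((ψ (ellU l) : ℂ))⁻¹)^n := by
        rw [unram_pow l ψ hψ x n hn, Units.val_pow_eq_pow_val, inv_pow]
      have hrhs : ∑' m, (Sn l m).indicator (fun _ => β ^ m) x = β ^ n := by
        rw [tsum_eq_single n]
        · rw [Set.indicator_of_mem hn]
        · intro m hm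
          rw [Set.indicator_of_notMem]
          intro hmem
          exact hm (shell_unique l (hxn.symm.trans hmem)).symm
      rw [hrhs, hphi, one_mul, hχx, hψx, hxn, cast_shell, hβdef, mul_pow, mul_pow]
    · have hphi : phi0 l ![0, (x:ℚ_[l])] = 0 := by
        simp [phi0, hx]
      have hrhs : ∑' m, (Sn l m).indicator (fun _ => β ^ m) x = 0 := by
        have hz : ∀ m : ℕ, (Sn l m).indicator (fun _ => β ^ m) x = 0 := by
          intro m
          rw [Set.indicator_of_notMem]
          intro hmem
          exact hx ((hmem : ‖(x:ℚ_[l])‖ = _).trans_le (shell_le_one l m))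
        rw [tsum_congr hz, tsum_zero]
      rw [hphi, hrhs, zero_mul, zero_mul]
  have hβne : (1 : ℂ) - β ≠ 0 := by
    intro h
    have : β = 1 := by linear_combination -h
    rw [this] at hβ; simp at hβ
  have hL : LrecipOne l χ ψ = 1 - β := rfl
  calc (∫ x : ℚ_[l]ˣ,
      phi0 l (Matrix.vecMul ![0, (x : ℚ_[l])] ((1 : GL2 l) : Matrix (Fin 2) (Fin 2) ℚ_[l])) *
        ((χ x : ℂ) * ((ψ x : ℂ))⁻¹) * (‖(x : ℚ_[l])‖ : ℂ) ∂μx)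
      = ∫ x : ℚ_[l]ˣ, ∑' n, (Sn l n).indicator (fun _ => β ^ n) x ∂μx :=
        integral_congr_ae (Filter.Eventually.of_forall hpt)
    _ = ∑' n, ∫ x : ℚ_[l]ˣ, (Sn l n).indicator (fun _ => β ^ n) x ∂μx := by
        apply integral_tsum
        · exact fun n => (stronglyMeasurable_const.indicator (measSn l n)).aestronglyMeasurable
        · have hcalc : ∀ n : ℕ, (∫⁻ x, ‖(Sn l n).indicator (fun _ => β ^ n) x‖₊ ∂μx)
              = (‖β‖₊ : ENNReal) ^ n := by
            intro n
            have : ∀ x, (‖(Sn l n).indicator (fun _ => β ^ n) x‖₊ : ENNReal)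
                = (Sn l n).indicator (fun _ => (‖β‖₊ : ENNReal) ^ n) x := by
              intro x
              by_cases hx : x ∈ Sn l n
              · simp [Set.indicator_of_mem hx, nnnorm_pow, ENNReal.coe_pow]
              · simp [Set.indicator_of_notMem hx]
            rw [lintegral_congr this, lintegral_indicator_const (measSn l n),
              muSn l μx hμx n, mul_one]
          change ∑' (i : ℕ), ∫⁻ (a : ℚ_[l]ˣ), (‖(Sn l i).indicator (fun x => β ^ i) a‖₊ : ENNReal) ∂μx ≠ ⊤
          rw [tsum_congr hcalc, ENNReal.tsum_geometric]
          refine ENNReal.inv_ne_top.mpr ?_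
          have h1 : (‖β‖₊ : ENNReal) < 1 := by
            rw [ENNReal.coe_lt_one_iff]
            exact_mod_cast hβ
          simp only [ne_eq, tsub_eq_zero_iff_le]
          exact fun hle => absurd (lt_of_lt_of_le h1 hle) (lt_irrefl _)
    _ = ∑' n : ℕ, β ^ n := by
        refine tsum_congr fun n => ?_
        rw [integral_indicator (measSn l n), setIntegral_const, measureReal_def, muSn l μx hμx n]
        simp
    _ = (1 - β)⁻¹ := tsum_geometric_of_norm_lt_one hβ
    _ = (LrecipOne l χ ψ)⁻¹ := by rw [hL]

lemma LrecipOne_ne (χ ψ : PChar l)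
    (hlt : ‖(χ (ellU l) : ℂ) / (ψ (ellU l) : ℂ)‖ < l) :
    LrecipOne l χ ψ ≠ 0 := by
  have hβ := norm_beta_lt l χ ψ hlt
  intro h
  have : (χ (ellU l) : ℂ) * ((ψ (ellU l) : ℂ))⁻¹ * (l:ℂ)⁻¹ = 1 := by
    have := h
    unfold LrecipOne at this
    linear_combination -this
  rw [this] at hβ; simp at hβ

lemma siegel_front (χ ψ : PChar l) (μx : Measure ℚ_[l]ˣ) (φ : (Fin 2 → ℚ_[l]) → ℂ) :
    siegelSection l μx φ χ ψ 1 = LrecipOne l χ ψ *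
      ∫ x : ℚ_[l]ˣ,
        φ (Matrix.vecMul ![0, (x : ℚ_[l])] ((1 : GL2 l) : Matrix (Fin 2) (Fin 2) ℚ_[l])) *
          ((χ x : ℂ) * ((ψ x : ℂ))⁻¹) * (‖(x : ℚ_[l])‖ : ℂ) ∂μx := by
  have hdet : detU2 l (1 : GL2 l) = 1 := map_one Matrix.GeneralLinearGroup.det
  rw [siegelSection, hdet]
  simp [Real.sqrt_one]

lemma siegel_phi0_one (μx : Measure ℚ_[l]ˣ) [μx.IsHaarMeasure]
    (hμx : μx {x : ℚ_[l]ˣ | ‖(x : ℚ_[l])‖ = 1} = 1)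
    (χ ψ : PChar l) (hχ : IsUnramifiedChar l χ) (hψ : IsUnramifiedChar l ψ)
    (hlt : ‖(χ (ellU l) : ℂ) / (ψ (ellU l) : ℂ)‖ < l) :
    siegelSection l μx (phi0 l) χ ψ 1 = 1 := by
  rw [siegel_front, int_phi0 l μx χ ψ hχ hψ hμx hlt,
    mul_inv_cancel₀ (LrecipOne_ne l χ ψ hlt)]

lemma int_phiT (μx : Measure ℚ_[l]ˣ) [μx.IsHaarMeasure] (t : ℕ)
    (χ ψ : PChar l) (hχ : IsUnramifiedChar l χ) (hψ : IsUnramifiedChar l ψ)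
    (hμx : μx {x : ℚ_[l]ˣ | ‖(x : ℚ_[l])‖ = 1} = 1) :
    (∫ x : ℚ_[l]ˣ,
      phiT l t (Matrix.vecMul ![0, (x : ℚ_[l])] ((1 : GL2 l) : Matrix (Fin 2) (Fin 2) ℚ_[l])) *
        ((χ x : ℂ) * ((ψ x : ℂ))⁻¹) * (‖(x : ℚ_[l])‖ : ℂ) ∂μx) = 1 := by
  have hpt : ∀ x : ℚ_[l]ˣ,
      phiT l t (Matrix.vecMul ![0, (x : ℚ_[l])] ((1 : GL2 l) : Matrix (Fin 2) (Fin 2) ℚ_[l])) *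
        ((χ x : ℂ) * ((ψ x : ℂ))⁻¹) * (‖(x : ℚ_[l])‖ : ℂ)
      = (Sn l 0).indicator (fun _ => (1:ℂ)) x := by
    intro x
    rw [Units.val_one, Matrix.vecMul_one]
    by_cases hx : ‖(x : ℚ_[l])‖ = 1
    · have hmem : x ∈ Sn l 0 := by rw [Sn_zero]; exact hx
      have hphi : phiT l t ![0, (x:ℚ_[l])] = 1 := by
        have h0 : (0:ℝ) ≤ (l:ℝ) ^ (-(t:ℤ)) := le_of_lt (zpow_pos (l_pos l) _)
        simp [phiT, hx, h0]
      rw [Set.indicator_of_mem hmem, hphi, hx]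
      have h1 : (χ x : ℂ) = 1 := by rw [hχ x hx]; rfl
      have h2 : (ψ x : ℂ) = 1 := by rw [hψ x hx]; rfl
      rw [h1, h2]; simp
    · have hmem : x ∉ Sn l 0 := by rw [Sn_zero]; exact hx
      have hphi : phiT l t ![0, (x:ℚ_[l])] = 0 := by
        simp [phiT, hx]
      rw [Set.indicator_of_notMem hmem, hphi, zero_mul, zero_mul]
  rw [integral_congr_ae (Filter.Eventually.of_forall hpt),
    integral_indicator (measSn l 0), setIntegral_const, measureReal_def, muSn l μx hμx 0]
  simp

lemma siegel_phiT_one (μx : Measure ℚ_[l]ˣ) [μx.IsHaarMeasure]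
    (hμx : μx {x : ℚ_[l]ˣ | ‖(x : ℚ_[l])‖ = 1} = 1) (t : ℕ)
    (χ ψ : PChar l) (hχ : IsUnramifiedChar l χ) (hψ : IsUnramifiedChar l ψ) :
    siegelSection l μx (phiT l t) χ ψ 1 = LrecipOne l χ ψ := by
  rw [siegel_front, int_phiT l μx t χ ψ hχ hψ hμx, mul_one]

lemma vecMul_pair (c : ℚ_[l]) (M : Matrix (Fin 2) (Fin 2) ℚ_[l]) :
    Matrix.vecMul ![0, c] M = ![c * M 1 0, c * M 1 1] := by
  ext j
  fin_cases j <;>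
    simp [Matrix.vecMul, dotProduct, Fin.sum_univ_two, Matrix.vecHead, Matrix.vecTail]

lemma siegel_phiT_vanish (μx : Measure ℚ_[l]ˣ) (t : ℕ) (χ ψ : PChar l) (g : GL2 l)
    (h : ∀ x : ℚ_[l]ˣ, ¬(‖(x:ℚ_[l]) * (g : Matrix (Fin 2) (Fin 2) ℚ_[l]) 1 0‖ ≤ (l:ℝ)^(-(t:ℤ)) ∧
        ‖(x:ℚ_[l]) * (g : Matrix (Fin 2) (Fin 2) ℚ_[l]) 1 1‖ = 1)) :
    siegelSection l μx (phiT l t) χ ψ g = 0 := by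
  rw [siegelSection]
  have : ∀ x : ℚ_[l]ˣ,
      phiT l t (Matrix.vecMul ![0, (x : ℚ_[l])] (g : Matrix (Fin 2) (Fin 2) ℚ_[l])) *
        ((χ x : ℂ) * ((ψ x : ℂ))⁻¹) * (‖(x : ℚ_[l])‖ : ℂ) = 0 := by
    intro x
    rw [vecMul_pair]
    have hphi : phiT l t ![(x:ℚ_[l]) * (g : Matrix (Fin 2) (Fin 2) ℚ_[l]) 1 0,
        (x:ℚ_[l]) * (g : Matrix (Fin 2) (Fin 2) ℚ_[l]) 1 1] = 0 := by
      simp only [phiT, Matrix.cons_val_zero, Matrix.cons_val_one, Matrix.head_cons]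
      exact if_neg (h x)
    rw [hphi, zero_mul, zero_mul]
  rw [integral_congr_ae (Filter.Eventually.of_forall this), integral_zero, mul_zero]

def lowK (c : ℚ_[l]) : GL2 l :=
  ⟨!![1,0;c,1], !![1,0;-c,1],
    by ext i j; fin_cases i <;> fin_cases j <;>
      simp [Matrix.mul_apply, Fin.sum_univ_two, Matrix.one_apply],
    by ext i j; fin_cases i <;> fin_cases j <;>
      simp [Matrix.mul_apply, Fin.sum_univ_two, Matrix.one_apply]⟩

lemma factor (t : ℕ) (g : GL2 l)
    (e : ∃ x : ℚ_[l]ˣ, ‖(x:ℚ_[l]) * (g : Matrix (Fin 2) (Fin 2) ℚ_[l]) 1 0‖ ≤ (l:ℝ)^(-(t:ℤ)) ∧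
        ‖(x:ℚ_[l]) * (g : Matrix (Fin 2) (Fin 2) ℚ_[l]) 1 1‖ = 1) :
    ∃ b k : GL2 l, (b : Matrix (Fin 2) (Fin 2) ℚ_[l]) 1 0 = 0 ∧
      detU2 l b = detU2 l g ∧ inGL2Z l k ∧ detU2 l k = 1 ∧
      ‖(k : Matrix (Fin 2) (Fin 2) ℚ_[l]) 1 0‖ ≤ (l:ℝ)^(-(t:ℤ)) ∧ g = b * k := by
  obtain ⟨x, hx1, hx2⟩ := e
  set A := (g : Matrix (Fin 2) (Fin 2) ℚ_[l]) with hA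
  have hne : A 1 1 ≠ 0 := by
    intro h
    rw [h, mul_zero, norm_zero] at hx2
    exact one_ne_zero hx2.symm
  set c : ℚ_[l] := A 1 0 * (A 1 1)⁻¹ with hc
  have hnc : ‖c‖ ≤ (l:ℝ)^(-(t:ℤ)) := by
    have hxA : ‖(x:ℚ_[l])‖ * ‖A 1 1‖ = 1 := by rw [← norm_mul]; exact hx2
    have hAinv : ‖(A 1 1)⁻¹‖ = ‖(x:ℚ_[l])‖ := by
      rw [norm_inv]
      exact (eq_inv_of_mul_eq_one_left hxA).symm
    calc ‖c‖ = ‖A 1 0‖ * ‖(A 1 1)⁻¹‖ := norm_mul _ _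
      _ = ‖(x:ℚ_[l]) * A 1 0‖ := by rw [hAinv, norm_mul, mul_comm]
      _ ≤ _ := hx1
  refine ⟨g * (lowK l c)⁻¹, lowK l c, ?_, ?_, ?_, ?_, ?_, ?_⟩
  · show ((g * (lowK l c)⁻¹ : GL2 l) : Matrix (Fin 2) (Fin 2) ℚ_[l]) 1 0 = 0
    have hcoe : ((g * (lowK l c)⁻¹ : GL2 l) : Matrix (Fin 2) (Fin 2) ℚ_[l])
        = A * !![1,0;-c,1] := rfl
    rw [hcoe]
    rw [Matrix.mul_apply, Fin.sum_univ_two]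
    have e1 : (!![1,0;-c,1] : Matrix (Fin 2) (Fin 2) ℚ_[l]) 0 0 = 1 := rfl
    have e2 : (!![1,0;-c,1] : Matrix (Fin 2) (Fin 2) ℚ_[l]) 1 0 = -c := rfl
    rw [e1, e2, hc]
    field_simp
    ring
  · show detU2 l (g * (lowK l c)⁻¹) = detU2 l g
    unfold detU2
    rw [_root_.map_mul, map_inv]
    have : Matrix.GeneralLinearGroup.det (lowK l c) = 1 := by
      apply Units.ext
      rw [Matrix.GeneralLinearGroup.val_det_apply]
      show Matrix.det !![1,0;c,1] = 1
      rw [Matrix.det_fin_two_of]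
      ring
    rw [this, inv_one, mul_one]
  · have hc1 : ‖c‖ ≤ 1 := hnc.trans (shell_le_one l t)
    constructor
    · intro i j
      fin_cases i <;> fin_cases j <;>
       simp_all [lowK, hnc.trans (shell_le_one l t)]
    · intro i j
      have : ((lowK l c)⁻¹ : GL2 l) = (⟨!![1,0;-c,1], !![1,0;c,1],
        by ext i j; fin_cases i <;> fin_cases j <;>
          simp [Matrix.mul_apply, Fin.sum_univ_two, Matrix.one_apply],
        by ext i j; fin_cases i <;> fin_cases j <;>
          simp [Matrix.mul_apply, Fin.sum_univ_two, Matrix.one_apply]⟩ : GL2 l) := rfl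
      rw [this]
      fin_cases i <;> fin_cases j <;>
       simp_all [hnc.trans (shell_le_one l t)]
  · apply Units.ext
    rw [detU2, Matrix.GeneralLinearGroup.val_det_apply]
    show Matrix.det !![1,0;c,1] = 1
    rw [Matrix.det_fin_two_of]; ring
  · show ‖(!![1,0;c,1] : Matrix (Fin 2) (Fin 2) ℚ_[l]) 1 0‖ ≤ _
    simpa using hnc
  · rw [inv_mul_cancel_right]


theorem statement17
    (μx : Measure ℚ_[l]ˣ) [μx.IsHaarMeasure]
    (hμx : μx {x : ℚ_[l]ˣ | ‖(x : ℚ_[l])‖ = 1} = 1)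
    (χ₁ χ₂ ψ₁ ψ₂ : PChar l)
    (hχ₁s : IsSmoothChar l χ₁) (hχ₂s : IsSmoothChar l χ₂)
    (hψ₁s : IsSmoothChar l ψ₁) (hψ₂s : IsSmoothChar l ψ₂)
    (hχ₁ : IsUnramifiedChar l χ₁) (hχ₂ : IsUnramifiedChar l χ₂)
    (hψ₁ : IsUnramifiedChar l ψ₁) (hψ₂ : IsUnramifiedChar l ψ₂)
    (hlt₁ : ‖(χ₁ (ellU l) : ℂ) / (ψ₁ (ellU l) : ℂ)‖ < l)
    (hlt₂ : ‖(χ₂ (ellU l) : ℂ) / (ψ₂ (ellU l) : ℂ)‖ < l) :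
    -- (a), t = 0
    (siegelSection l μx (phi0 l) χ₁ ψ₁ 1 * siegelSection l μx (phi0 l) χ₂ ψ₂ 1 = 1) ∧
    -- (a), t ≥ 1
    (∀ t : ℕ, 1 ≤ t →
      siegelSection l μx (phiT l t) χ₁ ψ₁ 1 * siegelSection l μx (phiT l t) χ₂ ψ₂ 1 =
        (1 - (χ₁ (ellU l) : ℂ) * ((ψ₁ (ellU l) : ℂ))⁻¹ * (l : ℂ)⁻¹) *
        (1 - (χ₂ (ellU l) : ℂ) * ((ψ₂ (ellU l) : ℂ))⁻¹ * (l : ℂ)⁻¹)) ∧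
    -- (b)
    (∀ t : ℕ, 1 ≤ t → ∀ h₁ h₂ : GL2 l, detU2 l h₁ = detU2 l h₂ →
      ¬ inBHKH0 l t h₁ h₂ →
      siegelSection l μx (phiT l t) χ₁ ψ₁ h₁ * siegelSection l μx (phiT l t) χ₂ ψ₂ h₂ = 0) := by
  refine ⟨?_, ?_, ?_⟩
  · rw [siegel_phi0_one l μx hμx χ₁ ψ₁ hχ₁ hψ₁ hlt₁,
      siegel_phi0_one l μx hμx χ₂ ψ₂ hχ₂ hψ₂ hlt₂, one_mul]
  · intro t _
    rw [siegel_phiT_one l μx hμx t χ₁ ψ₁ hχ₁ hψ₁,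
      siegel_phiT_one l μx hμx t χ₂ ψ₂ hχ₂ hψ₂]
    rfl
  · intro t _ h₁ h₂ hdet hn
    by_cases hE₁ : ∃ x : ℚ_[l]ˣ,
        ‖(x:ℚ_[l]) * (h₁ : Matrix (Fin 2) (Fin 2) ℚ_[l]) 1 0‖ ≤ (l:ℝ)^(-(t:ℤ)) ∧
        ‖(x:ℚ_[l]) * (h₁ : Matrix (Fin 2) (Fin 2) ℚ_[l]) 1 1‖ = 1
    · by_cases hE₂ : ∃ x : ℚ_[l]ˣ,
          ‖(x:ℚ_[l]) * (h₂ : Matrix (Fin 2) (Fin 2) ℚ_[l]) 1 0‖ ≤ (l:ℝ)^(-(t:ℤ)) ∧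
          ‖(x:ℚ_[l]) * (h₂ : Matrix (Fin 2) (Fin 2) ℚ_[l]) 1 1‖ = 1
      · exfalso
        obtain ⟨b₁, k₁, hb₁, hdb₁, hkZ₁, hdk₁, hnk₁, hg₁⟩ := factor l t h₁ hE₁
        obtain ⟨b₂, k₂, hb₂, hdb₂, hkZ₂, hdk₂, hnk₂, hg₂⟩ := factor l t h₂ hE₂
        exact hn ⟨b₁, b₂, k₁, k₂, hb₁, hb₂, by rw [hdb₁, hdet, hdb₂], hkZ₁, hkZ₂,
          by rw [hdk₁, hdk₂], hnk₁, hnk₂, hg₁, hg₂⟩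
      · push_neg at hE₂
        rw [siegel_phiT_vanish l μx t χ₂ ψ₂ h₂ (by
          intro x hx; exact absurd hx.2 (hE₂ x hx.1)), mul_zero]
    · push_neg at hE₁
      rw [siegel_phiT_vanish l μx t χ₁ ψ₁ h₁ (by
        intro x hx; exact absurd hx.2 (hE₁ x hx.1)), zero_mul]

end GSp4ES
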